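/- Let r : F̄X ⊗ FY ⟶ Ω be tame with witnesses (r_*, r^*) and assume the comparison cpX is symmetric. Then the dagger r† equals the composite j ∘ r̄ ∘ τ⁻¹ : F̄Y ⊗ FX ⟶ Ω, where τ = τ_{FX,FY} : (F̄X ⊗ FY)‾ ≅ F̄Y ⊗ FX is the twist. -/

import Mathlib

open CategoryTheory MonoidalCategory

universe u v

/-- The twist map `τ : (X̄ ⊗ Y)‾ ≅ Ȳ ⊗ X` in an involutive symmetric monoidal category. -/
noncomputable def twist {C : Type u} [Category.{v} C] [MonoidalCategory C]
    [SymmetricCategory C] (B : C ⥤ C) (ι : 𝟭 C ≅ B ⋙ B)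
    (ξ : ∀ X Y : C, B.obj X ⊗ B.obj Y ≅ B.obj (X ⊗ Y)) (X Y : C) :
    B.obj (B.obj X ⊗ Y) ≅ B.obj Y ⊗ X :=
  (ξ (B.obj X) Y).symm ≪≫ tensorIso (ι.app X).symm (Iso.refl (B.obj Y)) ≪≫ β_ X (B.obj Y)

/-- For a tame relation `r` with symmetric comparison `cpX`, the dagger
`r† = cpX ∘ ((r^*)‾ ⊗ id)` equals `j ∘ r̄ ∘ τ⁻¹`. -/
theorem dagger_eq_conjugate {C : Type u} [Category.{v} C] [MonoidalCategory C]
    [SymmetricCategory C] (B : C ⥤ C)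
    (ι : 𝟭 C ≅ B ⋙ B) (hι : ∀ X : C, B.map (ι.hom.app X) = ι.hom.app (B.obj X))
    (ζ : 𝟙_ C ≅ B.obj (𝟙_ C))
    (ξ : ∀ X Y : C, B.obj X ⊗ B.obj Y ≅ B.obj (X ⊗ Y))
    (hξ : ∀ {X X' Y Y' : C} (f : X ⟶ X') (g : Y ⟶ Y'),
      (B.map f ⊗ₘ B.map g) ≫ (ξ X' Y').hom = (ξ X Y).hom ≫ B.map (f ⊗ₘ g))
    (Ω FX FY : C) (j : B.obj Ω ⟶ Ω)
    (cpX : B.obj FX ⊗ FX ⟶ Ω) (cpY : B.obj FY ⊗ FY ⟶ Ω)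
    -- cpX is symmetric
    (hsymX : (twist B ι ξ FX FX).hom ≫ cpX = B.map cpX ≫ j)
    (r : B.obj FX ⊗ FY ⟶ Ω) (rst : FX ⟶ FY) (rco : FY ⟶ FX)
    (hr1 : (B.map rst ⊗ₘ 𝟙 FY) ≫ cpY = r)
    (hr2 : (𝟙 (B.obj FX) ⊗ₘ rco) ≫ cpX = r) :
    (B.map rco ⊗ₘ 𝟙 FX) ≫ cpX = (twist B ι ξ FX FY).inv ≫ B.map r ≫ j := by
  have hx := hξ (𝟙 (B.obj FX)) rco
  rw [B.map_id] at hx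
  have hxi : B.map (𝟙 (B.obj FX) ⊗ₘ rco) ≫ (ξ (B.obj FX) FX).inv
      = (ξ (B.obj FX) FY).inv ≫ (𝟙 (B.obj (B.obj FX)) ⊗ₘ B.map rco) := by
    rw [Iso.comp_inv_eq, Category.assoc, hx, ← Category.assoc, Iso.inv_hom_id,
      Category.id_comp]
  have key : B.map (𝟙 (B.obj FX) ⊗ₘ rco) ≫ (twist B ι ξ FX FX).hom
      = (twist B ι ξ FX FY).hom ≫ (B.map rco ⊗ₘ 𝟙 FX) := by
    simp only [twist, Iso.trans_hom, Iso.symm_hom, tensorIso_hom, Iso.refl_hom,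
      ← Category.assoc, hxi]
    simp only [Category.assoc]
    congr 1
    rw [← BraidedCategory.braiding_naturality, ← Category.assoc, tensorHom_comp_tensorHom]
    simp [tensorHom_def', whisker_exchange]
  rw [← hr2, B.map_comp, Category.assoc, ← hsymX, ← Category.assoc (B.map _), key]
  simp
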